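/- Let k be a field and C a k-coalgebra. A right C-comodule is a compact object of the category of right C-comodules if and only if it is finite-dimensional over k. -/

import Mathlib

open CategoryTheory CategoryTheory.Limits TensorProduct Opposite

universe u

variable (k : Type u) [Field k] (Q : Type u) [AddCommGroup Q] [Module k Q] [Coalgebra k Q]

/-- A right `Q`-comodule: a `k`-vector space with a coassociative counital coaction
`V → V ⊗ Q`. -/
structure Comod where
  carrier : Type u
  [isAddCommGroup : AddCommGroup carrier]
  [isModule : Module k carrier]
  coact : carrier →ₗ[k] carrier ⊗[k] Q
  coassoc : (TensorProduct.assoc k carrier Q Q).toLinearMap ∘ₗ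
      LinearMap.rTensor Q coact ∘ₗ coact =
    LinearMap.lTensor carrier Coalgebra.comul ∘ₗ coact
  counital : (TensorProduct.rid k carrier).toLinearMap ∘ₗ
      LinearMap.lTensor carrier Coalgebra.counit ∘ₗ coact = LinearMap.id

attribute [instance] Comod.isAddCommGroup Comod.isModule

variable {k Q}

/-- A morphism of right `Q`-comodules. -/
@[ext] structure ComodHom (M N : Comod k Q) where
  toLinearMap : M.carrier →ₗ[k] N.carrier
  compat : N.coact ∘ₗ toLinearMap = LinearMap.rTensor Q toLinearMap ∘ₗ M.coact

variable (k Q)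

instance : Category (Comod k Q) where
  Hom M N := ComodHom M N
  id M := ⟨LinearMap.id, by simp⟩
  comp {M N O} f g :=
    ⟨g.toLinearMap ∘ₗ f.toLinearMap, by
      ext x
      have h1 := LinearMap.congr_fun g.compat (f.toLinearMap x)
      have h2 := LinearMap.congr_fun f.compat x
      simp only [LinearMap.comp_apply] at h1 h2 ⊢
      rw [h1, h2, ← LinearMap.comp_apply, ← LinearMap.rTensor_comp]⟩
  id_comp f := ComodHom.ext (by simp)
  comp_id f := ComodHom.ext (by simp)
  assoc f g h := ComodHom.ext (by simp [LinearMap.comp_assoc])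

/-- An object `K` of a category is compact (finitely presentable) if `Hom(K, -)` preserves
filtered colimits. -/
def IsCompactObj {C : Type (u + 1)} [Category.{u} C] (K : C) : Prop :=
  ∀ (J : Type u) (_ : SmallCategory J) (_ : IsFiltered J),
    Nonempty (PreservesColimitsOfShape J (coyoneda.obj (op K)))


variable {k Q}

set_option linter.unusedSectionVars false
section Helpers

variable {A B : Type u} [AddCommGroup A] [Module k A] [AddCommGroup B] [Module k B]

lemma H1 (f : A →ₗ[k] B) :
    (TensorProduct.assoc k B Q Q).toLinearMap ∘ₗ
        LinearMap.rTensor Q (LinearMap.rTensor Q f) =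
      LinearMap.rTensor (Q ⊗[k] Q) f ∘ₗ (TensorProduct.assoc k A Q Q).toLinearMap := by
  apply TensorProduct.ext_threefold
  intro a q q'
  simp

lemma H2 {Q' : Type u} [AddCommGroup Q'] [Module k Q'] (f : A →ₗ[k] B) (g : Q →ₗ[k] Q') :
    LinearMap.lTensor B g ∘ₗ LinearMap.rTensor Q f =
      LinearMap.rTensor Q' f ∘ₗ LinearMap.lTensor A g := by
  apply TensorProduct.ext'
  intro a q
  simp

lemma H3 (f : A →ₗ[k] B) :
    (TensorProduct.rid k B).toLinearMap ∘ₗ LinearMap.rTensor k f =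
      f ∘ₗ (TensorProduct.rid k A).toLinearMap := by
  apply TensorProduct.ext'
  intro a c
  simp

lemma rT_inj (f : A →ₗ[k] B) (hf : Function.Injective f) {QQ : Type u} [AddCommGroup QQ]
    [Module k QQ] : Function.Injective (LinearMap.rTensor QQ f) :=
  Module.Flat.rTensor_preserves_injective_linearMap f hf

end Helpers

section Sub

variable {M : Type u} [AddCommGroup M] [Module k M]
variable (ρ : M →ₗ[k] M ⊗[k] Q)

/-- `N` is a subcomodule. -/
def IsSub (N : Submodule k M) : Prop :=
  ∀ n ∈ N, ρ n ∈ LinearMap.range (LinearMap.rTensor Q N.subtype)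

variable {ρ} {N : Submodule k M} (hN : IsSub ρ N)

noncomputable def subCoact : N →ₗ[k] N ⊗[k] Q :=
  ((LinearEquiv.ofInjective (LinearMap.rTensor Q N.subtype)
      (rT_inj N.subtype N.injective_subtype)).symm.toLinearMap) ∘ₗ
    LinearMap.codRestrict (LinearMap.range (LinearMap.rTensor Q N.subtype))
      (ρ ∘ₗ N.subtype) (fun n => hN n n.2)

lemma subCoact_fac :
    LinearMap.rTensor Q N.subtype ∘ₗ subCoact hN = ρ ∘ₗ N.subtype := by
  ext n
  simp only [LinearMap.comp_apply, subCoact]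
  set e := LinearEquiv.ofInjective (LinearMap.rTensor Q N.subtype)
      (rT_inj N.subtype N.injective_subtype)
  have : ∀ y, LinearMap.rTensor Q N.subtype (e.symm y) = (y : M ⊗[k] Q) := by
    intro y
    conv_rhs => rw [← e.apply_symm_apply y]
    rfl
  simp [this]
  rfl

end Sub

section SubComod

variable (M : Comod k Q)

/-- The subcomodule as a comodule. -/
noncomputable def Comod.sub {N : Submodule k M.carrier} (hN : IsSub M.coact N) : Comod k Q where
  carrier := N
  coact := subCoact hN
  coassoc := by
    apply LinearMap.ext
    intro n
    apply rT_inj (QQ := Q ⊗[k] Q) N.subtype N.injective_subtype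
    have fac := fun m => LinearMap.congr_fun (subCoact_fac hN) m
    simp only [LinearMap.comp_apply, Submodule.coe_subtype, LinearEquiv.coe_coe] at fac ⊢
    have h1 := LinearMap.congr_fun (H1 (Q := Q) N.subtype)
      (LinearMap.rTensor Q (subCoact hN) (subCoact hN n))
    simp only [LinearMap.comp_apply, LinearEquiv.coe_coe] at h1
    rw [← h1]
    have h2 : LinearMap.rTensor Q (LinearMap.rTensor Q N.subtype)
        (LinearMap.rTensor Q (subCoact hN) (subCoact hN n)) =
        LinearMap.rTensor Q M.coact (M.coact n) := by
      rw [← LinearMap.comp_apply, ← LinearMap.rTensor_comp, subCoact_fac hN,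
        LinearMap.rTensor_comp, LinearMap.comp_apply, fac]
    rw [h2]
    have h3 := LinearMap.congr_fun M.coassoc (n : M.carrier)
    simp only [LinearMap.comp_apply, LinearEquiv.coe_coe] at h3
    rw [h3]
    have h4 := LinearMap.congr_fun (H2 (Q := Q) N.subtype (Coalgebra.comul (R := k) (A := Q)))
      (subCoact hN n)
    simp only [LinearMap.comp_apply] at h4
    rw [← h4, fac]
  counital := by
    apply LinearMap.ext
    intro n
    apply Subtype.ext
    have fac := fun m => LinearMap.congr_fun (subCoact_fac hN) m
    simp only [LinearMap.comp_apply, Submodule.coe_subtype, LinearEquiv.coe_coe,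
      LinearMap.id_apply] at fac ⊢
    have h3 := LinearMap.congr_fun (H3 N.subtype)
      (LinearMap.lTensor (↥N) (Coalgebra.counit (R := k) (A := Q)) (subCoact hN n))
    simp only [LinearMap.comp_apply, LinearEquiv.coe_coe, Submodule.coe_subtype] at h3
    rw [← h3]
    have h4 := LinearMap.congr_fun (H2 (Q := Q) N.subtype (Coalgebra.counit (R := k) (A := Q)))
      (subCoact hN n)
    simp only [LinearMap.comp_apply] at h4
    rw [← h4, fac]
    have h5 := LinearMap.congr_fun M.counital (n : M.carrier)
    simp only [LinearMap.comp_apply, LinearEquiv.coe_coe, LinearMap.id_apply] at h5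
    exact h5

end SubComod

section Fund

variable {ι : Type u} [DecidableEq ι] (b : Module.Basis ι k Q)
variable (V : Type u) [AddCommGroup V] [Module k V]

/-- Coordinates of `V ⊗ Q` with respect to a basis of `Q`. -/
noncomputable def eQ : V ⊗[k] Q ≃ₗ[k] (ι →₀ V) :=
  (LinearEquiv.lTensor V b.repr) ≪≫ₗ TensorProduct.finsuppScalarRight k k V ι

variable {V}

lemma eQ_tmul (v : V) (q : Q) (i : ι) : eQ b V (v ⊗ₜ[k] q) i = b.repr q i • v := by
  simp [eQ, TensorProduct.finsuppScalarRight_apply_tmul_apply, LinearEquiv.lTensor_tmul]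

lemma eQ_apply_tmul_basis (v : V) (i : ι) : eQ b V (v ⊗ₜ[k] b i) = Finsupp.single i v := by
  ext j
  rw [eQ_tmul, b.repr_self]
  by_cases h : i = j <;> simp [Finsupp.single_apply, h]

lemma eQ_recon (y : V ⊗[k] Q) : y = (eQ b V y).sum fun i v => v ⊗ₜ[k] b i := by
  apply (eQ b V).injective
  rw [Finsupp.sum, map_sum,
    Finset.sum_congr rfl (fun i _ => eQ_apply_tmul_basis b ((eQ b V y) i) i)]
  conv_lhs => rw [← Finsupp.sum_single (eQ b V y), Finsupp.sum]

lemma eQ_nat {W : Type u} [AddCommGroup W] [Module k W] (φ : V →ₗ[k] W) (y : V ⊗[k] Q) (i : ι) :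
    eQ b W (LinearMap.rTensor Q φ y) i = φ (eQ b V y i) := by
  induction y using TensorProduct.induction_on with
  | zero => simp
  | tmul v q => simp [eQ_tmul, eQ_tmul]
  | add y z hy hz => simp [map_add, Finsupp.add_apply, hy, hz]

/-- Fundamental theorem of comodules: every element lies in a finite-dimensional
subcomodule. -/
theorem exists_fd_sub (M : Comod k Q) (x : M.carrier) :
    ∃ N : Submodule k M.carrier, FiniteDimensional k ↥N ∧ IsSub M.coact N ∧ x ∈ N := by
  classical
  set b : Module.Basis (Module.Basis.ofVectorSpaceIndex k Q) k Q := Module.Basis.ofVectorSpace k Q with hb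
  set f := eQ b M.carrier (M.coact x) with hf
  set N := Submodule.span k (Set.range ⇑f) with hNdef
  have hfin : (Set.range ⇑f).Finite := by
    refine Set.Finite.subset ((f.support.finite_toSet.image f).insert 0) ?_
    rintro - ⟨i, rfl⟩
    by_cases hi : i ∈ f.support
    · exact Set.mem_insert_of_mem _ (Set.mem_image_of_mem _ hi)
    · simp only [Finsupp.mem_support_iff, not_not] at hi
      rw [hi]; exact Set.mem_insert _ _
  have hFD : FiniteDimensional k ↥N := FiniteDimensional.span_of_finite k hfin
  have hmem : ∀ i, f i ∈ N := fun i => Submodule.subset_span ⟨i, rfl⟩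
  -- x ∈ N via counit
  have hx : x ∈ N := by
    have h5 := LinearMap.congr_fun M.counital x
    simp only [LinearMap.comp_apply, LinearEquiv.coe_coe, LinearMap.id_apply] at h5
    rw [← h5, eQ_recon b (M.coact x), Finsupp.sum, map_sum, map_sum]
    refine Submodule.sum_mem _ fun i _ => ?_
    simp only [LinearMap.lTensor_tmul, TensorProduct.rid_tmul]
    exact Submodule.smul_mem _ _ (hmem i)
  set R := LinearMap.range (LinearMap.rTensor Q N.subtype) with hR
  have htm : ∀ (n : ↥N) (q : Q), (n : M.carrier) ⊗ₜ[k] q ∈ R :=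
    fun n q => ⟨n ⊗ₜ[k] q, by simp⟩
  -- coact x ∈ R
  have hρx : M.coact x ∈ R := by
    rw [eQ_recon b (M.coact x), Finsupp.sum]
    exact Submodule.sum_mem _ fun i _ => htm ⟨f i, hmem i⟩ (b i)
  -- key claim
  have claim : ∀ w ∈ R, ∀ i,
      eQ b (M.carrier ⊗[k] Q) ((TensorProduct.assoc k M.carrier Q Q).symm
        (LinearMap.lTensor M.carrier Coalgebra.comul w)) i ∈ R := by
    rintro - ⟨w', rfl⟩ i
    induction w' using TensorProduct.induction_on with
    | zero => simp only [map_zero, Finsupp.coe_zero, Pi.zero_apply]; exact Submodule.zero_mem R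
    | tmul n q =>
      simp only [LinearMap.rTensor_tmul, LinearMap.lTensor_tmul, Submodule.coe_subtype]
      induction (Coalgebra.comul (R := k) q) using TensorProduct.induction_on with
      | zero => simp only [TensorProduct.tmul_zero, map_zero, Finsupp.coe_zero, Pi.zero_apply]
                exact Submodule.zero_mem R
      | tmul q1 q2 =>
        rw [TensorProduct.assoc_symm_tmul, eQ_tmul]
        exact Submodule.smul_mem _ _ (htm n q1)
      | add u1 u2 h1 h2 =>
        simp only [TensorProduct.tmul_add, map_add, Finsupp.add_apply]
        exact Submodule.add_mem _ h1 h2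
    | add w1 w2 h1 h2 =>
      simp only [map_add, Finsupp.add_apply]
      exact Submodule.add_mem _ h1 h2
  have key : ∀ i, M.coact (f i) ∈ R := by
    intro i
    have coas := LinearMap.congr_fun M.coassoc x
    simp only [LinearMap.comp_apply, LinearEquiv.coe_coe] at coas
    have hz : LinearMap.rTensor Q M.coact (M.coact x) =
        (TensorProduct.assoc k M.carrier Q Q).symm
          (LinearMap.lTensor M.carrier Coalgebra.comul (M.coact x)) := by
      rw [← coas, LinearEquiv.symm_apply_apply]
    have := eQ_nat b M.coact (M.coact x) i
    rw [hz] at this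
    rw [← hf] at this
    rw [← this]
    exact claim _ hρx i
  refine ⟨N, hFD, ?_, hx⟩
  intro n hn
  induction hn using Submodule.span_induction with
  | mem m hm => obtain ⟨i, rfl⟩ := hm; exact key i
  | zero => rw [map_zero]; exact Submodule.zero_mem R
  | add a b' _ _ ha hb' => rw [map_add]; exact Submodule.add_mem _ ha hb'
  | smul c a _ ha => rw [map_smul]; exact Submodule.smul_mem _ _ ha

end Fund

section Poset

variable {M₀ : Type u} [AddCommGroup M₀] [Module k M₀]

lemma range_rT_mono {N N' : Submodule k M₀} (h : N ≤ N') :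
    LinearMap.range (LinearMap.rTensor Q N.subtype) ≤
      LinearMap.range (LinearMap.rTensor Q N'.subtype) := by
  rintro - ⟨w, rfl⟩
  refine ⟨LinearMap.rTensor Q (Submodule.inclusion h) w, ?_⟩
  rw [← LinearMap.comp_apply, ← LinearMap.rTensor_comp, Submodule.subtype_comp_inclusion]

lemma IsSub.sup {ρ : M₀ →ₗ[k] M₀ ⊗[k] Q} {N N' : Submodule k M₀} (hN : IsSub ρ N)
    (hN' : IsSub ρ N') : IsSub ρ (N ⊔ N') := by
  intro n hn
  obtain ⟨a, ha, c, hc, rfl⟩ := Submodule.mem_sup.mp hn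
  rw [map_add]
  exact Submodule.add_mem _ (range_rT_mono le_sup_left (hN a ha))
    (range_rT_mono le_sup_right (hN' c hc))

variable (M : Comod k Q)

/-- The poset of finite-dimensional subcomodules. -/
def SubP : Type u := {N : Submodule k M.carrier // FiniteDimensional k ↥N ∧ IsSub M.coact N}

instance : PartialOrder (SubP M) := Subtype.partialOrder _

instance : Nonempty (SubP M) :=
  ⟨⟨⊥, inferInstance, by
    intro n hn
    simp only [Submodule.mem_bot] at hn
    subst hn
    rw [map_zero]
    exact Submodule.zero_mem _⟩⟩

/-- Sup in the poset. -/
def SubP.sup (N N' : SubP M) : SubP M :=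
  ⟨N.1 ⊔ N'.1, by
    haveI := N.2.1; haveI := N'.2.1
    exact Submodule.finiteDimensional_sup N.1 N'.1, N.2.2.sup N'.2.2⟩

lemma SubP.le_sup_left (N N' : SubP M) : N ≤ SubP.sup M N N' :=
  show N.1 ≤ N.1 ⊔ N'.1 from _root_.le_sup_left

lemma SubP.le_sup_right (N N' : SubP M) : N' ≤ SubP.sup M N N' :=
  show N'.1 ≤ N.1 ⊔ N'.1 from _root_.le_sup_right

instance : IsDirected (SubP M) (· ≤ ·) :=
  ⟨fun N N' => ⟨SubP.sup M N N', SubP.le_sup_left M N N', SubP.le_sup_right M N N'⟩⟩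

instance : IsFiltered (SubP M) := inferInstance

/-- Inclusion of subcomodules as a comodule map. -/
noncomputable def inclHom {N N' : SubP M} (h : N ≤ N') :
    ComodHom (Comod.sub M N.2.2) (Comod.sub M N'.2.2) where
  toLinearMap := Submodule.inclusion h
  compat := by
    apply LinearMap.ext
    intro n
    apply rT_inj (QQ := Q) N'.1.subtype N'.1.injective_subtype
    have fac := fun m => LinearMap.congr_fun (subCoact_fac N.2.2) m
    have fac' := fun m => LinearMap.congr_fun (subCoact_fac N'.2.2) m
    simp only [LinearMap.comp_apply, Submodule.coe_subtype] at fac fac' ⊢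
    show LinearMap.rTensor Q N'.1.subtype (subCoact N'.2.2 (Submodule.inclusion h n)) =
      LinearMap.rTensor Q N'.1.subtype
        (LinearMap.rTensor Q (Submodule.inclusion h) (subCoact N.2.2 n))
    rw [fac', ← LinearMap.comp_apply (LinearMap.rTensor Q N'.1.subtype),
      ← LinearMap.rTensor_comp, Submodule.subtype_comp_inclusion]
    exact (fac n).symm

/-- The diagram of finite-dimensional subcomodules. -/
noncomputable def subDiag : SubP M ⥤ Comod k Q where
  obj N := Comod.sub M N.2.2
  map {N N'} f := inclHom M (leOfHom f)
  map_id N := ComodHom.ext (LinearMap.ext fun x => rfl)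
  map_comp f g := ComodHom.ext (LinearMap.ext fun x => rfl)

/-- The canonical cocone over the subcomodule diagram with point `M`. -/
noncomputable def subCocone : Cocone (subDiag M) where
  pt := M
  ι :=
    { app := fun N => ⟨N.1.subtype, (subCoact_fac N.2.2).symm⟩
      naturality := fun N N' f => ComodHom.ext (LinearMap.ext fun x => rfl) }

end Poset

section SubColimit

variable (M : Comod k Q)

/-- Choice of a finite-dimensional subcomodule containing a given element. -/
noncomputable def pick (x : M.carrier) : SubP M :=
  ⟨(exists_fd_sub M x).choose, (exists_fd_sub M x).choose_spec.1,
    (exists_fd_sub M x).choose_spec.2.1⟩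

lemma mem_pick (x : M.carrier) : x ∈ (pick M x).1 := (exists_fd_sub M x).choose_spec.2.2

variable {M} (s : Cocone (subDiag M))

lemma leg_compat {N K : SubP M} (h : N ≤ K) (x : M.carrier) (hx : x ∈ N.1) :
    (s.ι.app N).toLinearMap ⟨x, hx⟩ = (s.ι.app K).toLinearMap ⟨x, h hx⟩ := by
  have t := LinearMap.congr_fun (congrArg ComodHom.toLinearMap (s.w (homOfLE h))) ⟨x, hx⟩
  refine t.symm.trans ?_
  show (s.ι.app K).toLinearMap (Submodule.inclusion h ⟨x, hx⟩) = _
  exact congrArg _ (Subtype.ext rfl)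

/-- The underlying function of the descent map. -/
noncomputable def fbar (x : M.carrier) : s.pt.carrier :=
  (s.ι.app (pick M x)).toLinearMap ⟨x, mem_pick M x⟩

lemma fbar_key (N : SubP M) (x : M.carrier) (hx : x ∈ N.1) :
    fbar s x = (s.ι.app N).toLinearMap ⟨x, hx⟩ := by
  have e1 := leg_compat s (SubP.le_sup_left M (pick M x) N) x (mem_pick M x)
  have e2 := leg_compat s (SubP.le_sup_right M (pick M x) N) x hx
  exact (e1.trans e2.symm :)

/-- The descent as a linear map. -/
noncomputable def descLin : M.carrier →ₗ[k] s.pt.carrier where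
  toFun := fbar s
  map_add' := by
    intro x y
    show fbar s (x + y) = fbar s x + fbar s y
    set K := SubP.sup M (pick M x) (pick M y) with hK
    have hxK : x ∈ K.1 := SubP.le_sup_left M _ _ (mem_pick M x)
    have hyK : y ∈ K.1 := SubP.le_sup_right M _ _ (mem_pick M y)
    rw [fbar_key s K x hxK, fbar_key s K y hyK, fbar_key s K (x + y) (K.1.add_mem hxK hyK),
      show (⟨x + y, K.1.add_mem hxK hyK⟩ : ↥K.1) = ⟨x, hxK⟩ + ⟨y, hyK⟩ from rfl]
    exact map_add _ _ _
  map_smul' := by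
    intro c x
    show fbar s (c • x) = c • fbar s x
    have hx : c • x ∈ (pick M x).1 := (pick M x).1.smul_mem c (mem_pick M x)
    rw [fbar_key s (pick M x) (c • x) hx,
      show (⟨c • x, hx⟩ : ↥(pick M x).1) = c • ⟨x, mem_pick M x⟩ from rfl]
    exact map_smul _ _ _

lemma descLin_comp_subtype (N : SubP M) :
    descLin s ∘ₗ N.1.subtype = (s.ι.app N).toLinearMap := by
  apply LinearMap.ext
  intro n
  simp only [LinearMap.comp_apply, Submodule.coe_subtype]
  exact (fbar_key s N ↑n n.2).trans (congrArg _ (Subtype.ext rfl))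

/-- The descent as a comodule map. -/
noncomputable def descHom : ComodHom M s.pt where
  toLinearMap := descLin s
  compat := by
    apply LinearMap.ext
    intro x
    set N := pick M x with hN
    have hx := mem_pick M x
    simp only [LinearMap.comp_apply]
    have leg : s.pt.coact ((s.ι.app N).toLinearMap ⟨x, hx⟩) =
        LinearMap.rTensor Q (s.ι.app N).toLinearMap (subCoact N.2.2 ⟨x, hx⟩) := by
      have := LinearMap.congr_fun (s.ι.app N).compat ⟨x, hx⟩
      exact this
    have e0 : descLin s x = (s.ι.app N).toLinearMap ⟨x, hx⟩ := fbar_key s N x hx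
    rw [e0, leg]
    have fac := LinearMap.congr_fun (subCoact_fac N.2.2) ⟨x, hx⟩
    simp only [LinearMap.comp_apply, Submodule.coe_subtype] at fac
    rw [show M.coact x = M.coact ((⟨x, hx⟩ : ↥N.1) : M.carrier) from rfl, ← fac,
      ← LinearMap.comp_apply (LinearMap.rTensor Q (descLin s)), ← LinearMap.rTensor_comp,
      descLin_comp_subtype]
    rfl

/-- `M` is the colimit of its finite-dimensional subcomodules. -/
noncomputable def subIsColimit : IsColimit (subCocone M) where
  desc := fun s => descHom s
  fac := fun s N => by
    apply ComodHom.ext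
    apply LinearMap.ext
    intro n
    show descLin s (N.1.subtype n) = _
    exact LinearMap.congr_fun (descLin_comp_subtype s N) n
  uniq := fun s m w => by
    apply ComodHom.ext
    apply LinearMap.ext
    intro x
    have hx := mem_pick M x
    exact LinearMap.congr_fun (congrArg ComodHom.toLinearMap (w (pick M x))) ⟨x, hx⟩

end SubColimit

section Forward

theorem fd_of_isCompact (M : Comod k Q) (h : IsCompactObj M) :
    FiniteDimensional k M.carrier := by
  obtain ⟨pres⟩ := h (SubP M) inferInstance inferInstance
  haveI := pres
  have hmap := isColimitOfPreserves (coyoneda.obj (op M)) (subIsColimit (M := M))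
  obtain ⟨N, g, hg⟩ := Types.jointly_surjective _ hmap (𝟙 M)
  have hlin : ∀ x : M.carrier, (N.1.subtype (g.toLinearMap x) : M.carrier) = x := by
    intro x
    exact LinearMap.congr_fun (congrArg ComodHom.toLinearMap hg) x
  have htop : N.1 = ⊤ := by
    rw [Submodule.eq_top_iff']
    intro x
    rw [← hlin x]
    exact (g.toLinearMap x).2
  haveI : FiniteDimensional k ↥(⊤ : Submodule k M.carrier) := htop ▸ N.2.1
  exact (Submodule.topEquiv (R := k) (M := M.carrier)).finiteDimensional

end Forward

section ModColim

open MonoidalCategory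

variable {J : Type u} [SmallCategory J] [IsFiltered J]

lemma elem_eventually_zero (G : J ⥤ ModuleCat.{u} k) {c : Cocone G} (hc : IsColimit c)
    (j : J) (z : G.obj j) (hz : c.ι.app j z = 0) :
    ∃ (j' : J) (u : j ⟶ j'), G.map u z = 0 := by
  have hT := isColimitOfPreserves (forget (ModuleCat.{u} k)) hc
  have heq : ((forget (ModuleCat.{u} k)).mapCocone c).ι.app j z =
      ((forget (ModuleCat.{u} k)).mapCocone c).ι.app j 0 := by
    show c.ι.app j z = c.ι.app j 0
    rw [hz, map_zero]
  obtain ⟨j', f, g', hfg⟩ := (Types.FilteredColimit.isColimit_eq_iff _ hT).mp heq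
  refine ⟨j', f, ?_⟩
  have : G.map g' (0 : G.obj j) = 0 := map_zero _
  exact hfg.trans this

lemma list_eventually_zero (G : J ⥤ ModuleCat.{u} k) {c : Cocone G} (hc : IsColimit c)
    (j : J) (s : List (G.obj j)) (hs : ∀ z ∈ s, c.ι.app j z = 0) :
    ∃ (j' : J) (u : j ⟶ j'), ∀ z ∈ s, G.map u z = 0 := by
  induction s with
  | nil => exact ⟨j, 𝟙 j, by simp⟩
  | cons a t ih =>
    obtain ⟨j1, u1, h1⟩ := ih (fun z hz => hs z (List.mem_cons_of_mem _ hz))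
    have ha : c.ι.app j1 (G.map u1 a) = 0 := by
      have hw := LinearMap.congr_fun (congrArg ModuleCat.Hom.hom (c.w u1)) a
      exact hw.trans (hs a List.mem_cons_self)
    obtain ⟨j2, u2, h2⟩ := elem_eventually_zero G hc j1 (G.map u1 a) ha
    refine ⟨j2, u1 ≫ u2, ?_⟩
    intro z hz
    rcases List.mem_cons.mp hz with rfl | hz'
    · rw [G.map_comp]
      exact h2
    · rw [G.map_comp]
      show G.map u2 (G.map u1 z) = 0
      rw [h1 z hz', map_zero]

lemma exists_common_rep (G : J ⥤ ModuleCat.{u} k) {c : Cocone G} (hc : IsColimit c)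
    (n : ℕ) (v : Fin n → c.pt) :
    ∃ (j : J) (x : Fin n → G.obj j), ∀ i, c.ι.app j (x i) = v i := by
  classical
  have hT := isColimitOfPreserves (forget (ModuleCat.{u} k)) hc
  choose j y hy using fun i => Types.jointly_surjective _ hT (v i)
  obtain ⟨S, hS⟩ := IsFiltered.sup_objs_exists (Finset.image j Finset.univ)
  have hf : ∀ i, Nonempty (j i ⟶ S) := fun i => hS (Finset.mem_image_of_mem j (Finset.mem_univ i))
  refine ⟨S, fun i => G.map (hf i).some (y i), fun i => ?_⟩
  have hw := LinearMap.congr_fun (congrArg ModuleCat.Hom.hom (c.w (hf i).some)) (y i)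
  exact hw.trans (hy i)

/-- `tensorLeft Q ≅ tensorRight Q` in `ModuleCat`. -/
noncomputable def tLtR : tensorLeft (ModuleCat.of k Q) ≅ tensorRight (ModuleCat.of k Q) :=
  NatIso.ofComponents
    (fun V => (TensorProduct.comm k Q V).toModuleIso)
    (fun {V W} f => by
      apply ModuleCat.hom_ext
      apply TensorProduct.ext'
      intro q v
      show (TensorProduct.comm k Q W) ((ModuleCat.of k Q ◁ f) (q ⊗ₜ v)) =
        (f ▷ ModuleCat.of k Q) ((TensorProduct.comm k Q V) (q ⊗ₜ v))
      rw [ModuleCat.MonoidalCategory.whiskerLeft_apply, TensorProduct.comm_tmul,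
        TensorProduct.comm_tmul, ModuleCat.MonoidalCategory.whiskerRight_apply])

noncomputable instance : PreservesColimits (tensorRight (ModuleCat.of k Q)) :=
  preservesColimits_of_natIso (tLtR (k := k) (Q := Q))

lemma wr_eq {A B : ModuleCat.{u} k} (f : A ⟶ B) :
    (f ▷ ModuleCat.of k Q : (A ⊗ ModuleCat.of k Q : ModuleCat.{u} k) ⟶ _).hom =
      LinearMap.rTensor Q f.hom := by
  apply TensorProduct.ext'
  intro a q
  rfl

end ModColim

section ComodColim

open MonoidalCategory

/-- The forgetful functor to `ModuleCat`. -/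
def toMod : Comod k Q ⥤ ModuleCat.{u} k where
  obj A := ModuleCat.of k A.carrier
  map f := ModuleCat.ofHom f.toLinearMap
  map_id _ := rfl
  map_comp _ _ := rfl

variable {J : Type u} [SmallCategory J] [IsFiltered J] (F : J ⥤ Comod k Q)

/-- Underlying `ModuleCat` diagram. -/
abbrev FM : J ⥤ ModuleCat.{u} k := F ⋙ toMod

noncomputable abbrev Lpt : ModuleCat.{u} k := colimit (FM F)

/-- Colimit inclusion as a linear map. -/
noncomputable def iL (j : J) : (F.obj j).carrier →ₗ[k] (Lpt F : Type u) :=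
  (colimit.ι (FM F) j).hom

lemma iL_w {j j' : J} (f : j ⟶ j') : iL F j' ∘ₗ (F.map f).toLinearMap = iL F j :=
  congrArg ModuleCat.Hom.hom (colimit.w (FM F) f)

/-- The tensored colimit cocone. -/
noncomputable abbrev ccT : Cocone (FM F ⋙ tensorRight (ModuleCat.of k Q)) :=
  (tensorRight (ModuleCat.of k Q)).mapCocone (colimit.cocone (FM F))

noncomputable def hT : IsColimit (ccT F) :=
  isColimitOfPreserves (tensorRight (ModuleCat.of k Q)) (colimit.isColimit (FM F))

lemma ccT_app (j : J) :
    (((ccT F).ι.app j).hom : ((F.obj j).carrier ⊗[k] Q) →ₗ[k] ((Lpt F : Type u) ⊗[k] Q)) =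
      LinearMap.rTensor Q (iL F j) := wr_eq _

/-- The coaction cocone. -/
noncomputable def coactCocone : Cocone (FM F) where
  pt := (tensorRight (ModuleCat.of k Q)).obj (Lpt F)
  ι :=
    { app := fun j => show (FM F).obj j ⟶ _ from
        ModuleCat.ofHom (LinearMap.rTensor Q (iL F j) ∘ₗ (F.obj j).coact)
      naturality := fun {j j'} f => by
        apply ModuleCat.hom_ext
        apply LinearMap.ext
        intro (x : (F.obj j).carrier)
        show LinearMap.rTensor Q (iL F j')
            ((F.obj j').coact ((F.map f).toLinearMap x)) =
          LinearMap.rTensor Q (iL F j) ((F.obj j).coact x)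
        have hcp := LinearMap.congr_fun (F.map f).compat x
        simp only [LinearMap.comp_apply] at hcp
        rw [hcp, ← LinearMap.comp_apply, ← LinearMap.rTensor_comp, iL_w] }

/-- The coaction on the colimit, as a linear map. -/
noncomputable def deltaL : (Lpt F : Type u) →ₗ[k] ((Lpt F : Type u) ⊗[k] Q) :=
  (colimit.desc (FM F) (coactCocone F)).hom

lemma deltaL_fac (j : J) :
    deltaL F ∘ₗ iL F j = LinearMap.rTensor Q (iL F j) ∘ₗ (F.obj j).coact :=
  congrArg ModuleCat.Hom.hom (colimit.ι_desc (coactCocone F) j)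

lemma L_ext {X : Type u} [AddCommGroup X] [Module k X]
    (φ ψ : (Lpt F : Type u) →ₗ[k] X)
    (h : ∀ j, φ ∘ₗ iL F j = ψ ∘ₗ iL F j) : φ = ψ := by
  have : (show Lpt F ⟶ ModuleCat.of k X from ModuleCat.ofHom φ) =
      (show Lpt F ⟶ ModuleCat.of k X from ModuleCat.ofHom ψ) :=
    colimit.hom_ext (fun j => ModuleCat.hom_ext (h j))
  exact congrArg ModuleCat.Hom.hom this

/-- The colimit comodule. -/
noncomputable def Lc : Comod k Q where
  carrier := Lpt F
  coact := deltaL F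
  coassoc := by
    apply L_ext
    intro j
    apply LinearMap.ext
    intro x
    simp only [LinearMap.comp_apply, LinearEquiv.coe_coe]
    have hfac := LinearMap.congr_fun (deltaL_fac F j) x
    simp only [LinearMap.comp_apply] at hfac
    rw [hfac]
    set y := (F.obj j).coact x with hy
    have step1 : LinearMap.rTensor Q (deltaL F) (LinearMap.rTensor Q (iL F j) y) =
        LinearMap.rTensor Q (LinearMap.rTensor Q (iL F j))
          (LinearMap.rTensor Q (F.obj j).coact y) := by
      rw [← LinearMap.comp_apply, ← LinearMap.rTensor_comp, deltaL_fac F j,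
        LinearMap.rTensor_comp, LinearMap.comp_apply]
    rw [step1]
    have step2 := LinearMap.congr_fun (H1 (Q := Q) (iL F j))
      (LinearMap.rTensor Q (F.obj j).coact y)
    simp only [LinearMap.comp_apply, LinearEquiv.coe_coe] at step2
    rw [step2]
    have step3 := LinearMap.congr_fun (F.obj j).coassoc x
    simp only [LinearMap.comp_apply, LinearEquiv.coe_coe] at step3
    rw [← hy] at step3
    rw [step3]
    have step4 := LinearMap.congr_fun (H2 (Q := Q) (iL F j)
      (Coalgebra.comul (R := k) (A := Q))) y
    simp only [LinearMap.comp_apply] at step4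
    rw [← step4]
  counital := by
    apply L_ext
    intro j
    apply LinearMap.ext
    intro x
    simp only [LinearMap.comp_apply, LinearEquiv.coe_coe, LinearMap.id_apply]
    have hfac := LinearMap.congr_fun (deltaL_fac F j) x
    simp only [LinearMap.comp_apply] at hfac
    rw [hfac]
    set y := (F.obj j).coact x with hy
    have step4 := LinearMap.congr_fun (H2 (Q := Q) (iL F j)
      (Coalgebra.counit (R := k) (A := Q))) y
    simp only [LinearMap.comp_apply] at step4
    rw [step4]
    have step5 := LinearMap.congr_fun (H3 (iL F j))
      (LinearMap.lTensor _ (Coalgebra.counit (R := k) (A := Q)) y)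
    simp only [LinearMap.comp_apply, LinearEquiv.coe_coe] at step5
    rw [step5]
    have step6 := LinearMap.congr_fun (F.obj j).counital x
    simp only [LinearMap.comp_apply, LinearEquiv.coe_coe, LinearMap.id_apply] at step6
    rw [← hy] at step6
    rw [step6]

/-- The colimit cocone in `Comod`. -/
noncomputable def comodCocone : Cocone F where
  pt := Lc F
  ι :=
    { app := fun j => ⟨iL F j, deltaL_fac F j⟩
      naturality := fun {j j'} f => by
        apply ComodHom.ext
        show iL F j' ∘ₗ (F.map f).toLinearMap = _
        rw [iL_w]
        rfl }

/-- The descent linear map for a cocone `s`. -/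
noncomputable def dm (s : Cocone F) : (Lpt F : Type u) →ₗ[k] s.pt.carrier :=
  (colimit.desc (FM F) (toMod.mapCocone s)).hom

lemma dm_fac (s : Cocone F) (j : J) : dm F s ∘ₗ iL F j = (s.ι.app j).toLinearMap :=
  congrArg ModuleCat.Hom.hom (colimit.ι_desc (toMod.mapCocone s) j)

/-- It is a colimit. -/
noncomputable def comodCoconeIsColimit : IsColimit (comodCocone F) where
  desc s :=
    { toLinearMap := dm F s
      compat := by
        apply L_ext
        intro j
        apply LinearMap.ext
        intro x
        show s.pt.coact (dm F s (iL F j x)) = LinearMap.rTensor Q (dm F s) (deltaL F (iL F j x))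
        have h1 := LinearMap.congr_fun (dm_fac F s j) x
        simp only [LinearMap.comp_apply] at h1
        rw [h1]
        have leg : s.pt.coact ((s.ι.app j).toLinearMap x) =
            LinearMap.rTensor Q (s.ι.app j).toLinearMap ((F.obj j).coact x) := by
          have := LinearMap.congr_fun (s.ι.app j).compat x
          exact this
        have hfac := LinearMap.congr_fun (deltaL_fac F j) x
        simp only [LinearMap.comp_apply] at hfac
        have h3 : LinearMap.rTensor Q (dm F s)
            (LinearMap.rTensor Q (iL F j) ((F.obj j).coact x)) =
            LinearMap.rTensor Q (s.ι.app j).toLinearMap ((F.obj j).coact x) := by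
          rw [← LinearMap.comp_apply, ← LinearMap.rTensor_comp, dm_fac]
        exact leg.trans (h3.symm.trans (congrArg (LinearMap.rTensor Q (dm F s)) hfac.symm))
      }
  fac := fun s j => by
    apply ComodHom.ext
    exact dm_fac F s j
  uniq := fun s m w => by
    apply ComodHom.ext
    apply L_ext
    intro j
    rw [dm_fac]
    show m.toLinearMap ∘ₗ iL F j = _
    exact congrArg ComodHom.toLinearMap (w j)

end ComodColim

section Compactness

open MonoidalCategory

variable {J : Type u} [SmallCategory J] [IsFiltered J] (F : J ⥤ Comod k Q)
variable (M : Comod k Q) [FiniteDimensional k M.carrier]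

/-- The mapped cocone under `Hom(M, -)` is a colimit in types. -/
noncomputable def mappedIsColimit :
    IsColimit ((coyoneda.obj (op M)).mapCocone (comodCocone F)) := by
  set bas : Module.Basis (Fin (Module.finrank k M.carrier)) k M.carrier :=
    Module.finBasis k M.carrier with hbas
  apply Types.FilteredColimit.isColimitOf
  · -- surjectivity
    intro f
    obtain ⟨j₀, xv, hx⟩ := exists_common_rep (FM F) (colimit.isColimit (FM F))
      (Module.finrank k M.carrier) (fun i => f.toLinearMap (bas i))
    set g0 : M.carrier →ₗ[k] (F.obj j₀).carrier :=
      bas.constr k (fun i => (xv i : (F.obj j₀).carrier)) with hg0def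
    have hg0 : iL F j₀ ∘ₗ g0 = f.toLinearMap := by
      apply bas.ext
      intro i
      simp only [LinearMap.comp_apply, hg0def, Module.Basis.constr_basis]
      exact (congrArg (iL F j₀) (Module.Basis.constr_basis bas k _ i)).trans (hx i)
    set d : M.carrier →ₗ[k] ((F.obj j₀).carrier ⊗[k] Q) :=
      (F.obj j₀).coact ∘ₗ g0 - LinearMap.rTensor Q g0 ∘ₗ M.coact with hd_def
    have hd : LinearMap.rTensor Q (iL F j₀) ∘ₗ d = 0 := by
      apply LinearMap.ext
      intro x
      simp only [hd_def, LinearMap.comp_apply, LinearMap.sub_apply, map_sub,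
        LinearMap.zero_apply]
      have e1 : LinearMap.rTensor Q (iL F j₀) ((F.obj j₀).coact (g0 x)) =
          deltaL F (iL F j₀ (g0 x)) :=
        (LinearMap.congr_fun (deltaL_fac F j₀) (g0 x)).symm
      have e2 : iL F j₀ (g0 x) = f.toLinearMap x := LinearMap.congr_fun hg0 x
      have e3 : deltaL F (f.toLinearMap x) =
          LinearMap.rTensor Q f.toLinearMap (M.coact x) := by
        have := LinearMap.congr_fun f.compat x
        exact this
      have e4 : LinearMap.rTensor Q (iL F j₀) (LinearMap.rTensor Q g0 (M.coact x)) =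
          LinearMap.rTensor Q f.toLinearMap (M.coact x) := by
        rw [← LinearMap.comp_apply, ← LinearMap.rTensor_comp, hg0]
        rfl
      rw [e1, e2, e3, e4]
      exact sub_self _
    obtain ⟨j₁, u, hu⟩ := list_eventually_zero (FM F ⋙ tensorRight (ModuleCat.of k Q))
      (hT F) j₀ (List.ofFn (fun i => d (bas i)))
      (by
        intro z hz
        obtain ⟨i, rfl⟩ := List.mem_ofFn.mp hz
        have h0 := LinearMap.congr_fun (ccT_app F j₀) (d (bas i))
        refine h0.trans ?_
        have := LinearMap.congr_fun hd (bas i)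
        exact this)
    have hdu : LinearMap.rTensor Q (F.map u).toLinearMap ∘ₗ d = 0 := by
      apply bas.ext
      intro i
      simp only [LinearMap.comp_apply, LinearMap.zero_apply]
      have h0 := LinearMap.congr_fun (wr_eq (k := k) (Q := Q) ((FM F).map u)) (d (bas i))
      refine Eq.trans h0.symm ?_
      exact hu (d (bas i)) ((List.mem_ofFn.mpr ⟨i, rfl⟩))
    refine ⟨j₁, ⟨(F.map u).toLinearMap ∘ₗ g0, ?_⟩, ?_⟩
    · -- comodule compatibility
      apply LinearMap.ext
      intro x
      simp only [LinearMap.comp_apply]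
      have e5 : (F.obj j₁).coact ((F.map u).toLinearMap (g0 x)) =
          LinearMap.rTensor Q (F.map u).toLinearMap ((F.obj j₀).coact (g0 x)) := by
        have := LinearMap.congr_fun (F.map u).compat (g0 x)
        simpa only [LinearMap.comp_apply] using this
      have e6 : (F.obj j₀).coact (g0 x) =
          LinearMap.rTensor Q g0 (M.coact x) + d x := by
        simp only [hd_def, LinearMap.sub_apply, LinearMap.comp_apply]
        abel
      have e7 : LinearMap.rTensor Q (F.map u).toLinearMap (d x) = 0 :=
        LinearMap.congr_fun hdu x
      rw [e5, e6, map_add, e7, add_zero, ← LinearMap.comp_apply, ← LinearMap.rTensor_comp]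
    · -- factorization
      apply ComodHom.ext
      show f.toLinearMap = iL F j₁ ∘ₗ ((F.map u).toLinearMap ∘ₗ g0)
      rw [← LinearMap.comp_assoc, iL_w, hg0]
  · -- injectivity
    intro i j xi xj hexy
    set a := IsFiltered.leftToMax i j with ha
    set b := IsFiltered.rightToMax i j with hb
    set h : M.carrier →ₗ[k] (F.obj (IsFiltered.max i j)).carrier :=
      (F.map a).toLinearMap ∘ₗ xi.toLinearMap - (F.map b).toLinearMap ∘ₗ xj.toLinearMap
      with hh_def
    have hexy' : iL F i ∘ₗ xi.toLinearMap = iL F j ∘ₗ xj.toLinearMap :=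
      congrArg ComodHom.toLinearMap hexy
    have hh : ∀ x, iL F (IsFiltered.max i j) (h x) = 0 := by
      intro x
      simp only [hh_def, LinearMap.sub_apply, LinearMap.comp_apply, map_sub]
      have e1 : iL F (IsFiltered.max i j) ((F.map a).toLinearMap (xi.toLinearMap x)) =
          iL F i (xi.toLinearMap x) := by
        have := LinearMap.congr_fun (iL_w F a) (xi.toLinearMap x)
        simpa only [LinearMap.comp_apply] using this
      have e2 : iL F (IsFiltered.max i j) ((F.map b).toLinearMap (xj.toLinearMap x)) =
          iL F j (xj.toLinearMap x) := by
        have := LinearMap.congr_fun (iL_w F b) (xj.toLinearMap x)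
        simpa only [LinearMap.comp_apply] using this
      rw [e1, e2]
      have := LinearMap.congr_fun hexy' x
      simp only [LinearMap.comp_apply] at this
      rw [this, sub_self]
    obtain ⟨j₂, u, hu⟩ := list_eventually_zero (FM F) (colimit.isColimit (FM F))
      (IsFiltered.max i j) (List.ofFn (fun i' => h (bas i')))
      (by
        intro z hz
        obtain ⟨i', rfl⟩ := List.mem_ofFn.mp hz
        exact hh (bas i'))
    refine ⟨j₂, a ≫ u, b ≫ u, ?_⟩
    show xi ≫ F.map (a ≫ u) = xj ≫ F.map (b ≫ u)
    apply ComodHom.ext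
    apply bas.ext
    intro i'
    have h0 := hu (h (bas i')) ((List.mem_ofFn.mpr ⟨i', rfl⟩))
    simp only [hh_def, LinearMap.sub_apply, LinearMap.comp_apply, map_sub] at h0
    have h1 : (F.map u).toLinearMap ((F.map a).toLinearMap (xi.toLinearMap (bas i'))) =
        (F.map u).toLinearMap ((F.map b).toLinearMap (xj.toLinearMap (bas i'))) :=
      sub_eq_zero.mp ((map_sub (F.map u).toLinearMap _ _).symm.trans h0)
    show (F.map (a ≫ u)).toLinearMap (xi.toLinearMap (bas i')) =
      (F.map (b ≫ u)).toLinearMap (xj.toLinearMap (bas i'))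
    rw [F.map_comp, F.map_comp]
    exact h1

theorem isCompact_of_fd : IsCompactObj M := by
  intro J instJ instF
  exact ⟨⟨fun {F} =>
    preservesColimit_of_preserves_colimit_cocone (comodCoconeIsColimit F) (mappedIsColimit F M)⟩⟩

end Compactness

variable (k Q)

/-- Let `k` be a field and `Q` a `k`-coalgebra.  A right `Q`-comodule
is a compact object of the category of right `Q`-comodules if and only if it is
finite-dimensional over `k`. -/
theorem comodule_isCompact_iff_finiteDimensional (M : Comod k Q) :
    IsCompactObj M ↔ FiniteDimensional k M.carrier := by
  constructor
  · exact fd_of_isCompact M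
  · intro h
    exact isCompact_of_fd M
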